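/- Let φ be a 3-CNF formula with clauses c_1, ..., c_m over variables x_1, ..., x_n. Construct the graph G_φ with vertex set {c_1, ..., c_m} ∪ {x_i, x̄_i : i ∈ [n]} ∪ {s, t} and edge set {c_i c_j : 1 ≤ i < j ≤ m} ∪ {t x_i, t x̄_i : i ∈ [n]} ∪ {x_i c_j : the literal x_i occurs in clause c_j} ∪ {x̄_i c_j : the literal x̄_i occurs in clause c_j} ∪ {s t}. Then there exists a coloring c of V(G_φ) with two colors that makes G_φ rainbow vertex-connected and satisfies c(x_i) ≠ c(x̄_i) for every i ∈ [n] if and only if φ is satisfiable. -/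

import Mathlib

open SimpleGraph

/-- A walk is a rainbow path if it is a path and its internal vertices
(the support without the first and last vertex) receive pairwise distinct colors. -/
def IsRainbowPath {V α : Type*} (G : SimpleGraph V) (c : V → α) {u v : V}
    (p : G.Walk u v) : Prop :=
  p.IsPath ∧ (p.support.tail.dropLast.map c).Nodup

/-- A vertex coloring makes a graph rainbow vertex-connected if every two distinct
vertices are joined by a rainbow path. -/
def RainbowVertexConnected {V α : Type*} (G : SimpleGraph V) (c : V → α) : Prop :=
  ∀ u v : V, u ≠ v → ∃ p : G.Walk u v, IsRainbowPath G c p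

namespace SatGraph

variable {m n : ℕ}

/-- Vertices of `G_φ`: the clause vertices `c_i = Sum.inl i`, the literal vertices
`x_j = Sum.inr (Sum.inl (j, true))` and `x̄_j = Sum.inr (Sum.inl (j, false))`, and
`s = Sum.inr (Sum.inr true)`, `t = Sum.inr (Sum.inr false)`. -/
def Vert (m n : ℕ) : Type := Fin m ⊕ ((Fin n × Bool) ⊕ Bool)

/-- The adjacency generating relation of `G_φ`: the clause vertices form a clique, `t` is
joined to every literal vertex, each literal is joined to the clauses in which it occurs,
and `s` is joined to `t`. -/
def rel (φ : Fin m → Finset (Fin n × Bool)) : Vert m n → Vert m n → Prop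
  | Sum.inl _, Sum.inl _ => True
  | Sum.inr (Sum.inr false), Sum.inr (Sum.inl _) => True
  | Sum.inr (Sum.inl l), Sum.inl i => l ∈ φ i
  | Sum.inr (Sum.inr true), Sum.inr (Sum.inr false) => True
  | _, _ => False

/-- The graph `G_φ`. -/
def graph (φ : Fin m → Finset (Fin n × Bool)) : SimpleGraph (Vert m n) :=
  SimpleGraph.fromRel (rel φ)

/-! ### Auxiliary material -/

abbrev S : Vert m n := Sum.inr (Sum.inr true)
abbrev T : Vert m n := Sum.inr (Sum.inr false)
abbrev lit (l : Fin n × Bool) : Vert m n := Sum.inr (Sum.inl l)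
abbrev cl (i : Fin m) : Vert m n := Sum.inl i

lemma S_ne_T : (S : Vert m n) ≠ T := by
  intro h; injection h with h; injection h with h; exact Bool.noConfusion h

lemma cl_ne_cl {i j : Fin m} (h : i ≠ j) : (cl i : Vert m n) ≠ cl j := by
  intro hh; injection hh with hh; exact h hh

lemma cl_ne_inr {i : Fin m} {x : (Fin n × Bool) ⊕ Bool} :
    (cl i : Vert m n) ≠ Sum.inr x := fun h => Sum.inl_ne_inr h

lemma inr_ne_cl {i : Fin m} {x : (Fin n × Bool) ⊕ Bool} :
    (Sum.inr x : Vert m n) ≠ cl i := fun h => Sum.inr_ne_inl h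

lemma lit_ne_S {l : Fin n × Bool} : (lit l : Vert m n) ≠ S := by
  intro h; injection h with h; exact Sum.inl_ne_inr h

lemma lit_ne_T {l : Fin n × Bool} : (lit l : Vert m n) ≠ T := by
  intro h; injection h with h; exact Sum.inl_ne_inr h

lemma lit_inj {l l' : Fin n × Bool} (h : (lit l : Vert m n) = lit l') : l = l' := by
  injection h with h; injection h with h

lemma lit_ne_lit {l l' : Fin n × Bool} (h : l ≠ l') : (lit l : Vert m n) ≠ lit l' :=
  fun hh => h (lit_inj hh)

variable (φ : Fin m → Finset (Fin n × Bool))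

lemma adj_st : (graph φ).Adj S T :=
  ⟨S_ne_T, Or.inl trivial⟩

lemma adj_cl {i j : Fin m} (h : i ≠ j) : (graph φ).Adj (cl i) (cl j) :=
  ⟨cl_ne_cl h, Or.inl trivial⟩

lemma adj_t_lit (l : Fin n × Bool) : (graph φ).Adj T (lit l) :=
  ⟨by intro h; injection h with h; exact Sum.inr_ne_inl h, Or.inl trivial⟩

lemma adj_lit_cl {l : Fin n × Bool} {i : Fin m} (h : l ∈ φ i) :
    (graph φ).Adj (lit l) (cl i) :=
  ⟨inr_ne_cl, Or.inl h⟩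

lemma adj_s_iff {v : Vert m n} : (graph φ).Adj S v ↔ v = T := by
  constructor
  · rintro ⟨hne, h | h⟩ <;> rcases v with i | l | (_|_) <;> simp_all [rel] <;> rfl
  · rintro rfl; exact adj_st φ

lemma adj_t_iff {v : Vert m n} : (graph φ).Adj T v ↔ v = S ∨ ∃ l, v = lit l := by
  constructor
  · rintro ⟨hne, h | h⟩ <;> rcases v with i | l | (_|_) <;>
      first
      | exact Or.inr ⟨_, rfl⟩
      | exact Or.inl rfl
      | simp_all [rel]
  · rintro (rfl | ⟨l, rfl⟩)
    · exact (adj_st φ).symm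
    · exact adj_t_lit φ l

lemma adj_lit_cl_iff {l : Fin n × Bool} {i : Fin m} :
    (graph φ).Adj (lit l) (cl i) ↔ l ∈ φ i := by
  constructor
  · rintro ⟨hne, h | h⟩
    · exact h
    · exact absurd h (by simp [rel])
  · exact adj_lit_cl φ

lemma not_adj_t_cl (i : Fin m) : ¬ (graph φ).Adj T (cl i) := by
  rintro ⟨hne, h | h⟩ <;> simp_all [rel]

end SatGraph

section RainbowHelpers

variable {V α : Type*} {G : SimpleGraph V} {c : V → α}

lemma List.tail_dropLast_comm {β : Type*} (l : List β) :
    l.dropLast.tail = l.tail.dropLast := by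
  cases l with
  | nil => rfl
  | cons a l =>
    cases l with
    | nil => rfl
    | cons b l => simp [List.dropLast_cons₂]

lemma List.dropLast_reverse_eq {β : Type*} (l : List β) :
    l.reverse.dropLast = l.tail.reverse := by
  have h := List.tail_reverse (l := l.reverse)
  rw [List.reverse_reverse] at h
  rw [h, List.reverse_reverse]

lemma rainbow_reverse {u v : V} {p : G.Walk u v} (h : IsRainbowPath G c p) :
    IsRainbowPath G c p.reverse := by
  refine ⟨h.1.reverse, ?_⟩
  have key : p.reverse.support.tail.dropLast = p.support.tail.dropLast.reverse := by
    rw [SimpleGraph.Walk.support_reverse, List.tail_reverse,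
      List.dropLast_reverse_eq, List.tail_dropLast_comm]
  rw [key, List.map_reverse, List.nodup_reverse]
  exact h.2

lemma rainbow_one {u v : V} (h : G.Adj u v) :
    IsRainbowPath G c (SimpleGraph.Walk.cons h SimpleGraph.Walk.nil) := by
  constructor
  · simp [SimpleGraph.Walk.isPath_def, h.ne]
  · simp

lemma rainbow_two {u w v : V} (h1 : G.Adj u w) (h2 : G.Adj w v) (huv : u ≠ v) :
    IsRainbowPath G c
      (SimpleGraph.Walk.cons h1 (SimpleGraph.Walk.cons h2 SimpleGraph.Walk.nil)) := by
  constructor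
  · simp [SimpleGraph.Walk.isPath_def, h1.ne, h2.ne, huv]
  · simp

lemma rainbow_three {u w1 w2 v : V} (h1 : G.Adj u w1) (h2 : G.Adj w1 w2) (h3 : G.Adj w2 v)
    (huv : u ≠ v) (huw2 : u ≠ w2) (hw1v : w1 ≠ v) (hc : c w1 ≠ c w2) :
    IsRainbowPath G c (SimpleGraph.Walk.cons h1 (SimpleGraph.Walk.cons h2
      (SimpleGraph.Walk.cons h3 SimpleGraph.Walk.nil))) := by
  constructor
  · simp [SimpleGraph.Walk.isPath_def, h1.ne, h2.ne, h3.ne, huv, huw2, hw1v]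
  · simp [hc]

end RainbowHelpers

namespace SatGraph

variable {m n : ℕ}

/-- The coloring associated to an assignment `σ`. -/
def col (σ : Fin n → Bool) : Vert m n → Fin 2
  | Sum.inl _ => 0
  | Sum.inr (Sum.inl l) => if σ l.1 = l.2 then 0 else 1
  | Sum.inr (Sum.inr _) => 1

lemma col_T (σ : Fin n → Bool) : (col σ : Vert m n → Fin 2) T = 1 := rfl

lemma col_lit_sat (σ : Fin n → Bool) {l : Fin n × Bool} (h : σ l.1 = l.2) :
    (col σ : Vert m n → Fin 2) (lit l) = 0 := by simp [col, h]

lemma col_lit_ne_T (σ : Fin n → Bool) {l : Fin n × Bool} (h : σ l.1 = l.2) :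
    (col σ : Vert m n → Fin 2) (lit l) ≠ (col σ : Vert m n → Fin 2) T := by
  rw [col_lit_sat σ h, col_T]; decide

lemma fin2_three {a b d : Fin 2} (h1 : a ≠ b) (h2 : a ≠ d) (h3 : b ≠ d) : False := by
  revert h1 h2 h3; revert a b d; decide

lemma fin2_eq {a b d : Fin 2} (h1 : a ≠ d) (h2 : b ≠ d) : a = b := by
  revert h1 h2; revert a b d; decide

end SatGraph

open SatGraph in
/-- there is a two-coloring of `G_φ` making it rainbow vertex-connected and
giving `x_j` and `x̄_j` different colors for every `j` iff `φ` is satisfiable. -/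
theorem rvc_two_iff_satisfiable {m n : ℕ} (φ : Fin m → Finset (Fin n × Bool))
    (h3 : ∀ i, (φ i).card ≤ 3) :
    (∃ c : Vert m n → Fin 2, RainbowVertexConnected (graph φ) c ∧
        ∀ j : Fin n, c (Sum.inr (Sum.inl (j, true))) ≠ c (Sum.inr (Sum.inl (j, false)))) ↔
      (∃ σ : Fin n → Bool, ∀ i : Fin m, ∃ l ∈ φ i, σ l.1 = l.2) := by
  constructor
  · rintro ⟨c, hrvc, hneq⟩
    refine ⟨fun j => decide (c (lit (j, true)) ≠ c T), fun i => ?_⟩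
    obtain ⟨p, hp⟩ := hrvc S (cl i) inr_ne_cl
    suffices hkey : ∃ l ∈ φ i, c (lit l) ≠ c T by
      obtain ⟨l, hl, hcl⟩ := hkey
      refine ⟨l, hl, ?_⟩
      obtain ⟨j, b⟩ := l
      cases b with
      | true => simpa using hcl
      | false =>
        have h2 := hneq j
        have heq : c (lit (j, true)) = c T := fin2_eq h2 hcl.symm
        simp [heq]
    cases p with
    | cons h q =>
      obtain rfl := (adj_s_iff φ).1 h
      cases q with
      | cons h2 r =>
        rcases (adj_t_iff φ).1 h2 with rfl | ⟨l, rfl⟩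
        · -- second step returns to s: impossible in a path
          have hnd := hp.1.support_nodup
          simp only [SimpleGraph.Walk.support_cons, List.nodup_cons] at hnd
          exact absurd (List.mem_cons_of_mem _ (SimpleGraph.Walk.start_mem_support r))
            hnd.1
        · cases r with
          | cons h3 r2 =>
            rename_i w2
            cases r2 with
            | nil =>
              have hl : l ∈ φ i := (adj_lit_cl_iff φ).1 h3
              have hcol := hp.2
              simp only [SimpleGraph.Walk.support_cons, SimpleGraph.Walk.support_nil,
                List.tail_cons, List.dropLast_cons₂, List.dropLast_singleton,
                List.map_cons, List.map_nil, List.nodup_cons, List.mem_cons,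
                List.mem_singleton, List.not_mem_nil, not_false_iff, and_true,
                List.nodup_nil, or_false] at hcol
              exact ⟨l, hl, fun hc => hcol hc.symm⟩
            | cons h4 r3 =>
              -- at least three internal vertices: impossible with two colors
              exfalso
              rename_i w3
              have hcol := hp.2
              simp only [SimpleGraph.Walk.support_cons, List.tail_cons] at hcol
              rw [SimpleGraph.Walk.support_eq_cons r3] at hcol
              simp only [List.dropLast_cons₂, List.map_cons, List.nodup_cons,
                List.mem_cons, not_or] at hcol
              exact fin2_three hcol.1.1 hcol.1.2.1 hcol.2.1.1
  · rintro ⟨σ, hσ⟩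
    refine ⟨col σ, ?_, ?_⟩
    · intro u v huv
      rcases u with i | l | b <;> rcases v with i' | l' | b'
      · -- clause / clause
        exact ⟨_, rainbow_one (adj_cl φ (fun h => huv (by rw [h])))⟩
      · -- clause / literal
        obtain ⟨ℓ, hℓ, hsℓ⟩ := hσ i
        by_cases hl : l' ∈ φ i
        · exact ⟨_, rainbow_one ((adj_lit_cl φ hl).symm)⟩
        · refine ⟨_, rainbow_three ((adj_lit_cl φ hℓ).symm) ((adj_t_lit φ ℓ).symm)
            (adj_t_lit φ l') cl_ne_inr cl_ne_inr
            (lit_ne_lit (fun h => hl (h ▸ hℓ))) (col_lit_ne_T σ hsℓ)⟩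
      · -- clause / {s,t}
        obtain ⟨ℓ, hℓ, hsℓ⟩ := hσ i
        cases b' with
        | true =>
          exact ⟨_, rainbow_three ((adj_lit_cl φ hℓ).symm) ((adj_t_lit φ ℓ).symm)
            ((adj_st φ).symm) cl_ne_inr cl_ne_inr lit_ne_S (col_lit_ne_T σ hsℓ)⟩
        | false =>
          exact ⟨_, rainbow_two ((adj_lit_cl φ hℓ).symm) ((adj_t_lit φ ℓ).symm) cl_ne_inr⟩
      · -- literal / clause
        obtain ⟨ℓ, hℓ, hsℓ⟩ := hσ i'
        by_cases hl : l ∈ φ i'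
        · exact ⟨_, rainbow_one (adj_lit_cl φ hl)⟩
        · refine ⟨_, rainbow_three ((adj_t_lit φ l).symm) (adj_t_lit φ ℓ)
            (adj_lit_cl φ hℓ) inr_ne_cl
            (lit_ne_lit (fun h => hl (by rw [h]; exact hℓ))) inr_ne_cl ?_⟩
          exact fun h => col_lit_ne_T σ hsℓ h.symm
      · -- literal / literal
        exact ⟨_, rainbow_two ((adj_t_lit φ l).symm) (adj_t_lit φ l') huv⟩
      · -- literal / {s,t}
        cases b' with
        | true => exact ⟨_, rainbow_two ((adj_t_lit φ l).symm) ((adj_st φ).symm) lit_ne_S⟩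
        | false => exact ⟨_, rainbow_one (adj_t_lit φ l).symm⟩
      · -- {s,t} / clause
        obtain ⟨ℓ, hℓ, hsℓ⟩ := hσ i'
        cases b with
        | true =>
          refine ⟨_, rainbow_three (adj_st φ) (adj_t_lit φ ℓ) (adj_lit_cl φ hℓ)
            inr_ne_cl ?_ inr_ne_cl ?_⟩
          · intro h; injection h with h; exact Sum.inr_ne_inl h
          · exact fun h => col_lit_ne_T σ hsℓ h.symm
        | false =>
          exact ⟨_, rainbow_two (adj_t_lit φ ℓ) (adj_lit_cl φ hℓ) inr_ne_cl⟩
      · -- {s,t} / literal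
        cases b with
        | true =>
          refine ⟨_, rainbow_two (adj_st φ) (adj_t_lit φ l') ?_⟩
          intro h; injection h with h; exact Sum.inr_ne_inl h
        | false => exact ⟨_, rainbow_one (adj_t_lit φ l')⟩
      · -- {s,t} / {s,t}
        cases b with
        | true =>
          cases b' with
          | true => exact absurd rfl huv
          | false => exact ⟨_, rainbow_one (adj_st φ)⟩
        | false =>
          cases b' with
          | true => exact ⟨_, rainbow_one (adj_st φ).symm⟩
          | false => exact absurd rfl huv
    · intro j
      by_cases h : σ j
      · simp [col, h]
      · simp [col, h]
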